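/- Let Γ be the free group on generators {γ_i : i ∈ ℤ*} (ℤ* = ℤ \ {0}), and consider Hom(Γ, ℤ/2ℤ) identified with functions h : ℤ* → ℤ/2ℤ. Define τ¹_*(h)(i) = h(−i)+h(i−1)+h(i)+h(i+1) if i < −2; h(−i)+h(−2)+h(−3) if i = −2; h(−i)+h(−2) if i = −1; h(−i) if i > 0. For k ≥ 2, let C_k = {h : h(k)=h(−k−1)=1 and h(i)=0 for −k−1 < i < k}. Then for every k ≥ 2 and h ∈ C_k, the proximity P(τ¹_*(h)) = k+1, where P(h) = min{|i| : h(i) ≠ 0}. -/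
import Mathlib


/-- The map `τ¹_*` on functions `ℤ* → ℤ/2ℤ` (encoded as functions on `ℤ` whose value at
`0` is irrelevant and set to `0`). -/
def tau1 (h : ℤ → ZMod 2) : ℤ → ZMod 2 := fun i =>
  if i < -2 then h (-i) + h (i - 1) + h i + h (i + 1)
  else if i = -2 then h (-i) + h (-2) + h (-3)
  else if i = -1 then h (-i) + h (-2)
  else if i = 0 then 0
  else h (-i)

/-- The map `τ⁻¹_*` on functions `ℤ* → ℤ/2ℤ`. -/
def tauNeg1 (h : ℤ → ZMod 2) : ℤ → ZMod 2 := fun i =>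
  if i < 0 then h (-i)
  else if i = 0 then 0
  else if i = 1 then h (-i) + h 2
  else if i = 2 then h (-i) + h 2 + h 3
  else h (-i) + h (i - 1) + h i + h (i + 1)

/-- The cylinder set `C_k = {h : h(k) = h(-k-1) = 1, h(i) = 0 for -k-1 < i < k, i ≠ 0}`. -/
def Cyl (k : ℤ) : Set (ℤ → ZMod 2) :=
  {h | h k = 1 ∧ h (-k - 1) = 1 ∧ ∀ i : ℤ, -k - 1 < i → i < k → i ≠ 0 → h i = 0}

/-- `HasProx h k` says the proximity `P(h) = min {|i| : h(i) ≠ 0}` equals `k`. -/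
def HasProx (h : ℤ → ZMod 2) (k : ℤ) : Prop :=
  (h k ≠ 0 ∨ h (-k) ≠ 0) ∧ ∀ i : ℤ, i ≠ 0 → |i| < k → h i = 0

/-- For every `k ≥ 2` and `h ∈ C_k`, the proximity of `τ¹_*(h)` is `k + 1`. -/
theorem stmt11 (k : ℤ) (hk : 2 ≤ k) (h : ℤ → ZMod 2) (hh : h ∈ Cyl k) :
    HasProx (tau1 h) (k + 1) := by
  obtain ⟨h1, h2, h0⟩ := hh
  constructor
  · left
    show tau1 h (k + 1) ≠ 0
    unfold tau1
    rw [if_neg (by omega), if_neg (by omega), if_neg (by omega), if_neg (by omega),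
      show -(k + 1) = -k - 1 by ring, h2]
    decide
  · intro i hi0 hik
    obtain ⟨hlb', hub⟩ := abs_lt.mp hik
    have hlb : -k - 1 < i := by omega
    unfold tau1
    split_ifs with hA hB hC
    · by_cases hik' : i = -k
      · subst hik'
        rw [show -(-k) = k by ring, h1, h2,
          h0 (-k) (by omega) (by omega) (by omega),
          h0 (-k + 1) (by omega) (by omega) (by omega)]
        decide
      · rw [h0 (-i) (by omega) (by omega) (by omega),
          h0 (i - 1) (by omega) (by omega) (by omega),
          h0 i (by omega) (by omega) hi0,
          h0 (i + 1) (by omega) (by omega) (by omega)]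
        decide
    · subst hB
      rw [show -(-2 : ℤ) = 2 by ring]
      rcases eq_or_lt_of_le hk with hk2 | hk3
      · subst hk2
        norm_num at h1 h2
        rw [h1, h2, h0 (-2) (by omega) (by omega) (by omega)]
        decide
      · rw [h0 2 (by omega) (by omega) (by omega),
          h0 (-2) (by omega) (by omega) (by omega),
          h0 (-3) (by omega) (by omega) (by omega)]
        decide
    · subst hC
      rw [show -(-1 : ℤ) = 1 by ring,
        h0 1 (by omega) (by omega) (by omega),
        h0 (-2) (by omega) (by omega) (by omega)]
      decide
    · exact h0 (-i) (by omega) (by omega) (by omega)
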